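/- Let (W_n)_{n≥0} be the sequence of finite words over the alphabet {1, 2} defined by W_0 = ∅, W_1 = 1, and W_n = W_{n-1} · 2 · W_{n-2} · 2 · W_{n-1} for all n ≥ 2, and let W = (W(n))_{n≥1} be the infinite word beginning with W_n for all n. Then for every integer k ≥ 2, the k-kernel of W, namely the set {(W(k^i n + j))_{n≥1} : i ≥ 0, 0 ≤ j < k^i}, is infinite; i.e., W is not k-automatic for any k ≥ 2. -/

import Mathlib

set_option maxHeartbeats 1600000

/-- The words `W₀ = ε`, `W₁ = 1`, `Wₙ = Wₙ₋₁ · 2 · Wₙ₋₂ · 2 · Wₙ₋₁` over the alphabet `{1, 2}`. -/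
def W : ℕ → List ℕ
  | 0 => []
  | 1 => [1]
  | n + 2 => W (n + 1) ++ [2] ++ W n ++ [2] ++ W (n + 1)

/-- The `k`-kernel of a sequence `v`. -/
def kernelK (k : ℕ) (v : ℕ → ℕ) : Set (ℕ → ℕ) :=
  {w | ∃ i j : ℕ, j < k ^ i ∧ w = fun n => v (k ^ i * n + j)}

namespace Aux17
/-- Pell pairs: pq k = (P_k, Q_k) with P0=0,Q0=1, P'=P+Q, Q'=2P+Q. -/
def pq : ℕ → ℕ × ℕ
  | 0 => (0, 1)
  | k + 1 => ((pq k).1 + (pq k).2, 2 * (pq k).1 + (pq k).2)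

def pp (k : ℕ) : ℕ := (pq k).1
def qq (k : ℕ) : ℕ := (pq k).2

@[simp] lemma pp_zero : pp 0 = 0 := rfl
@[simp] lemma qq_zero : qq 0 = 1 := rfl
@[simp] lemma pp_succ (k : ℕ) : pp (k+1) = pp k + qq k := rfl
@[simp] lemma qq_succ (k : ℕ) : qq (k+1) = 2 * pp k + qq k := rfl

lemma qq_pos (k : ℕ) : 1 ≤ qq k := by
  induction k with
  | zero => simp
  | succ k ih => simp; omega

lemma pp_succ_lt (k : ℕ) : pp k < pp (k+1) := by
  have := qq_pos k; simp; omega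

lemma pp_mono : StrictMono pp := strictMono_nat_of_lt_succ pp_succ_lt

lemma le_pp (k : ℕ) : k ≤ pp k := by
  induction k with
  | zero => simp
  | succ k ih => have := qq_pos k; simp; omega

lemma qq_mono_le {a b : ℕ} (h : a ≤ b) : qq a ≤ qq b := by
  induction b with
  | zero => simp_all
  | succ b ih =>
    rcases Nat.lt_or_ge a (b+1) with h'|h'
    · have h1 := ih (by omega)
      have h2 : qq (b+1) = 2 * pp b + qq b := rfl
      omega
    · have : a = b + 1 := by omega
      rw [this]

open Real

noncomputable def s2 : ℝ := Real.sqrt 2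

lemma s2_sq : s2 ^ 2 = 2 := Real.sq_sqrt (by norm_num)
lemma s2_pos : 0 < s2 := Real.sqrt_pos.mpr (by norm_num)
lemma s2_lt : s2 < 1.41422 := by
  nlinarith [s2_sq, s2_pos]
lemma s2_gt : 1.41421 < s2 := by
  nlinarith [s2_sq, s2_pos]

lemma pell_real_sub (k : ℕ) : (qq k : ℝ) - pp k * s2 = (1 - s2)^k := by
  induction k with
  | zero => simp
  | succ k ih =>
    have h2 := s2_sq
    push_cast [pp_succ, qq_succ]
    rw [pow_succ, ← ih]
    push_cast
    ring_nf
    nlinarith [h2]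

lemma pell_real_add (k : ℕ) : (qq k : ℝ) + pp k * s2 = (1 + s2)^k := by
  induction k with
  | zero => simp
  | succ k ih =>
    have h2 := s2_sq
    push_cast [pp_succ, qq_succ]
    rw [pow_succ, ← ih]
    push_cast
    ring_nf
    nlinarith [h2]

lemma one_sub_s2 : (1 - s2) = -(s2 - 1) := by ring

lemma pell_real_sub' (k : ℕ) : (qq k : ℝ) - pp k * s2 = (-1)^k * (s2-1)^k := by
  rw [pell_real_sub, one_sub_s2, neg_pow]

/-- classification of solutions of t² - 2v² = ±1 -/
lemma pell_classify : ∀ v t : ℕ, (t^2 = 2*v^2 + 1 ∨ t^2 + 1 = 2*v^2) → ∃ k, t = qq k ∧ v = pp k := by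
  intro v
  induction v using Nat.strong_induction_on with
  | _ v ih =>
    intro t ht
    rcases Nat.eq_zero_or_pos v with rfl|hv
    · rcases ht with h|h
      · have : t = 1 := by nlinarith
        exact ⟨0, by simp [this]⟩
      · omega
    · have htv : v ≤ t := by
        rcases ht with h|h <;> nlinarith
      have ht2v : t < 2 * v := by
        rcases ht with h|h <;> nlinarith
      set t' := 2 * v - t with ht'
      set v' := t - v with hv'
      have h1 : (t' : ℤ) = 2 * v - t := by omega
      have h2 : (v' : ℤ) = t - v := by omega
      have hv'v : v' < v := by omega
      have ht'' : t'^2 = 2*v'^2 + 1 ∨ t'^2 + 1 = 2*v'^2 := by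
        rcases ht with h|h
        · right; zify at h ⊢; nlinarith [h1, h2]
        · left; zify at h ⊢; nlinarith [h1, h2]
      obtain ⟨k, hk1, hk2⟩ := ih v' hv'v t' ht''
      exact ⟨k + 1, by simp [qq_succ, pp_succ, ← hk1, ← hk2]; omega, by simp [pp_succ, ← hk1, ← hk2]; omega⟩

end Aux17

namespace Aux17X
end Aux17X

namespace Aux17
noncomputable def cc : ℝ := 1 - s2 / 2

lemma cc_pos : 0 < cc := by unfold cc; nlinarith [s2_lt]
lemma cc_lt_half : cc < 1/2 := by unfold cc; nlinarith [s2_gt]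

def side (x : ℝ) : Prop := Int.fract x < cc ∨ 1 - cc < Int.fract x

lemma side_add_int (x : ℝ) (z : ℤ) : side (x + z) ↔ side x := by
  unfold side; rw [Int.fract_add_intCast]

lemma fract_shift (x ε : ℝ) : Int.fract (x + ε) = Int.fract (Int.fract x + ε) := by
  conv_lhs => rw [← Int.floor_add_fract x]
  rw [add_assoc, Int.fract_intCast_add]

lemma stab (x ε : ℝ) (hε : |ε| < cc)
    (h1 : (Int.fract x - cc) * (Int.fract x + ε - cc) > 0)
    (h2 : (Int.fract x - (1 - cc)) * (Int.fract x + ε - (1 - cc)) > 0) :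
    (side (x + ε) ↔ side x) := by
  have hc0 := cc_pos
  have hch := cc_lt_half
  have hu0 : 0 ≤ Int.fract x := Int.fract_nonneg x
  have hu1 : Int.fract x < 1 := Int.fract_lt_one x
  set u := Int.fract x with hu
  have hε1 : -cc < ε := by cases abs_lt.mp hε; linarith
  have hε2 : ε < cc := by cases abs_lt.mp hε; linarith
  have hfs : Int.fract (x + ε) = Int.fract (u + ε) := fract_shift x ε
  rcases lt_trichotomy u cc with h|h|h
  · -- u < cc : side x true; show side (x+ε) true
    have h1' : u + ε < cc := by nlinarith
    have : Int.fract (u + ε) < cc ∨ 1 - cc < Int.fract (u + ε) := by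
      rcases le_or_gt 0 (u + ε) with h0|h0
      · left
        rw [Int.fract_eq_self.mpr ⟨h0, by linarith⟩]; exact h1'
      · right
        have : Int.fract (u + ε) = u + ε + 1 := by
          rw [show u + ε = (u + ε + 1) + (-1 : ℤ) by push_cast; ring, Int.fract_add_intCast,
            Int.fract_eq_self.mpr ⟨by linarith, by linarith⟩]
          push_cast; ring
        rw [this]; linarith
    unfold side
    constructor
    · intro _; left; exact h
    · intro _; rw [hfs]; exact this
  · nlinarith
  · rcases lt_trichotomy u (1 - cc) with h'|h'|h'
    · -- cc < u < 1-cc : both sides false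
      have ha : cc < u + ε := by nlinarith
      have hb : u + ε < 1 - cc := by nlinarith
      have hf : Int.fract (u + ε) = u + ε := Int.fract_eq_self.mpr ⟨by linarith, by linarith⟩
      unfold side
      rw [hfs, hf]
      constructor
      · rintro (h''|h'') <;> [left; right] <;> linarith
      · rintro (h''|h'') <;> linarith
    · nlinarith
    · -- u > 1 - cc : side x true, show side (x+ε) true
      have ha : 1 - cc < u + ε := by nlinarith
      have : Int.fract (u + ε) < cc ∨ 1 - cc < Int.fract (u + ε) := by
        rcases lt_or_ge (u + ε) 1 with h0|h0
        · right
          rw [Int.fract_eq_self.mpr ⟨by linarith, h0⟩]; exact ha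
        · left
          have : Int.fract (u + ε) = u + ε - 1 := by
            rw [show u + ε = (u + ε - 1) + (1 : ℤ) by push_cast; ring, Int.fract_add_intCast,
              Int.fract_eq_self.mpr ⟨by linarith, by linarith⟩]
            push_cast; ring
          rw [this]; linarith
      unfold side
      constructor
      · intro _; right; exact h'
      · intro _; rw [hfs]; exact this

end Aux17

namespace Aux17
noncomputable def ll : ℝ := s2 - 1

lemma ll_pos : 0 < ll := by unfold ll; nlinarith [s2_gt]
lemma ll_lt_one : ll < 1 := by unfold ll; nlinarith [s2_lt]
lemma ll_mul_one_add : ll * (1 + s2) = 1 := by unfold ll; nlinarith [s2_sq]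
lemma abs_one_sub_s2 : |1 - s2| = ll := by
  unfold ll; rw [abs_of_nonpos] <;> nlinarith [s2_gt]
lemma abs_one_sub_s2_pow (k : ℕ) : |(1 - s2)^k| = ll^k := by
  rw [abs_pow, abs_one_sub_s2]
lemma ll_pow_le {a b : ℕ} (h : a ≤ b) : ll^b ≤ ll^a :=
  pow_le_pow_of_le_one (le_of_lt ll_pos) (le_of_lt ll_lt_one) h
lemma ll_pow_pos (k : ℕ) : 0 < ll^k := pow_pos ll_pos k

lemma prod_pos_of_abs (δ ε : ℝ) (h : 2*|ε| < |δ|) : δ*(δ+2*ε) > 0 := by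
  rcases abs_cases δ with ⟨h1,h2⟩|⟨h1,h2⟩ <;> rcases abs_cases ε with ⟨h3,h4⟩|⟨h3,h4⟩ <;>
    nlinarith

lemma Dmod (t b : ℤ) (ht : Odd t) (hbe : Even b) : (2*t^2 - b^2) % 4 % 4 = 2 % 4 := by
  obtain ⟨j, hj⟩ := ht
  obtain ⟨l, hl⟩ := hbe
  subst hj hl
  ring_nf
  omega

lemma pell_case (t b : ℤ) (ht1 : 1 ≤ t) (hb : 2 ≤ b)
    (hD : 2*t^2 - b^2 = 2 ∨ 2*t^2 - b^2 = -2) :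
    ∃ k, t = (qq k : ℤ) ∧ b = 2 * (pp k : ℤ) := by
  have hbe : Even b := by
    by_contra hodd
    rw [Int.not_even_iff_odd] at hodd
    obtain ⟨l, hl⟩ := hodd
    subst hl
    have e : 2*t^2 - (2*l+1)^2 = 2*(t^2 - 2*l^2 - 2*l) - 1 := by ring
    rcases hD with h|h <;> rw [e] at h <;>
      (generalize t^2 - 2*l^2 - 2*l = A at h; omega)
  obtain ⟨w, hw⟩ := hbe
  have hw1 : 1 ≤ w := by omega
  have hD' : t^2 = 2*w^2 + 1 ∨ t^2 + 1 = 2*w^2 := by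
    rcases hD with h|h <;> [left; right] <;> nlinarith
  set tn := t.toNat with htn
  set wn := w.toNat with hwn
  have htt : (tn : ℤ) = t := Int.toNat_of_nonneg (by omega)
  have hww : (wn : ℤ) = w := Int.toNat_of_nonneg (by omega)
  have hD'' : tn^2 = 2*wn^2 + 1 ∨ tn^2 + 1 = 2*wn^2 := by
    rcases hD' with h|h <;> [left; right] <;> (zify; rw [htt, hww]; linarith)
  obtain ⟨k, hk1, hk2⟩ := pell_classify wn tn hD''
  exact ⟨k, by omega, by omega⟩

lemma qq_lower (m : ℕ) : 2 * pp (m+1) + 1 ≤ qq (m+2) := by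
  have h := qq_pos (m+1)
  have : qq (m+2) = 2 * pp (m+1) + qq (m+1) := rfl
  omega

lemma two_pp_s2 (k : ℕ) : 2 * (pp k : ℝ) * s2 = (1+s2)^k - (1-s2)^k := by
  have h1 := pell_real_add k
  have h2 := pell_real_sub k
  linarith

lemma cross1 (m : ℕ) (t b : ℤ) (ht : Odd t) (ht1 : 1 ≤ t) (hb : 2 ≤ b) (hbe : Even b)
    (htT : t ≤ 2 * (pp (m+1) : ℤ) - 1) (ε : ℝ) (hε : |ε| ≤ ll^(m+2)) :
    ((t:ℝ) * s2 - b) * (((t:ℝ) * s2 - b) + 2*ε) > 0 := by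
  set δ : ℝ := (t:ℝ) * s2 - b with hδ
  have hsum_pos : (0:ℝ) < (t:ℝ) * s2 + b := by
    have : (1:ℝ) ≤ (t:ℝ) := by exact_mod_cast ht1
    have : (2:ℝ) ≤ (b:ℝ) := by exact_mod_cast hb
    nlinarith [s2_pos]
  have hDid : δ * ((t:ℝ)*s2 + b) = ((2*t^2 - b^2 : ℤ) : ℝ) := by
    push_cast
    have := s2_sq
    nlinarith [s2_sq]
  have hmod := Dmod t b ht hbe
  have hDcases : 2*t^2 - b^2 = 2 ∨ 2*t^2 - b^2 = -2 ∨ 6 ≤ |2*t^2 - b^2| := by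
    rcases abs_cases (2*t^2-b^2) with ⟨h1,h2⟩|⟨h1,h2⟩ <;> omega
  have habsD : |δ| * ((t:ℝ)*s2 + b) = |((2*t^2 - b^2 : ℤ) : ℝ)| := by
    rw [← hDid, abs_mul, abs_of_pos hsum_pos]
  -- Pell helper needs k ≤ m+1
  rcases hDcases with hD|hD|hD
  · -- Pell case +
    obtain ⟨k, hk1, hk2⟩ := pell_case t b ht1 hb (Or.inl hD)
    have hkle : k ≤ m + 1 := by
      by_contra hk
      have : qq (m+2) ≤ qq k := qq_mono_le (by omega)
      have := qq_lower m
      omega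
    have hδval : δ = s2 * (1 - s2)^k := by
      rw [hδ, hk1, hk2, ← pell_real_sub]
      push_cast
      nlinarith [s2_sq]
    have habs : |δ| = s2 * ll^k := by
      rw [hδval, abs_mul, abs_of_pos s2_pos, abs_one_sub_s2_pow]
    apply prod_pos_of_abs
    rw [habs]
    have h1 : ll^(m+1) ≤ ll^k := ll_pow_le hkle
    have h2 : ll^(m+2) = ll * ll^(m+1) := by ring
    have hx := ll_pow_pos (m+1)
    have hA : 2*ll < s2 := by unfold ll; nlinarith [s2_lt]
    have hB : 2*ll^(m+2) < s2 * ll^(m+1) := by rw [h2]; nlinarith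
    have hC : s2*ll^(m+1) ≤ s2*ll^k := by nlinarith [s2_pos]
    linarith
  · -- Pell case -
    obtain ⟨k, hk1, hk2⟩ := pell_case t b ht1 hb (Or.inr hD)
    have hkle : k ≤ m + 1 := by
      by_contra hk
      have : qq (m+2) ≤ qq k := qq_mono_le (by omega)
      have := qq_lower m
      omega
    have hδval : δ = s2 * (1 - s2)^k := by
      rw [hδ, hk1, hk2, ← pell_real_sub]
      push_cast
      nlinarith [s2_sq]
    have habs : |δ| = s2 * ll^k := by
      rw [hδval, abs_mul, abs_of_pos s2_pos, abs_one_sub_s2_pow]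
    apply prod_pos_of_abs
    rw [habs]
    have h1 : ll^(m+1) ≤ ll^k := ll_pow_le hkle
    have h2 : ll^(m+2) = ll * ll^(m+1) := by ring
    have hx := ll_pow_pos (m+1)
    have hA : 2*ll < s2 := by unfold ll; nlinarith [s2_lt]
    have hB : 2*ll^(m+2) < s2 * ll^(m+1) := by rw [h2]; nlinarith
    have hC : s2*ll^(m+1) ≤ s2*ll^k := by nlinarith [s2_pos]
    linarith
  · -- big D case
    apply prod_pos_of_abs
    by_contra hle
    push_neg at hle
    have hεb : 2*|ε| ≤ 2*ll^2 := by
      have : ll^(m+2) ≤ ll^2 := ll_pow_le (by omega)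
      linarith
    have hll2 : ll^2 = 3 - 2*s2 := by unfold ll; linear_combination s2_sq
    have h2e1 : 2*|ε| < 1 := by linarith [s2_gt]
    have habs_le : |δ| ≤ 2*|ε| := hle
    have hbb : (b:ℝ) ≤ (t:ℝ)*s2 + 1 := by
      have : -(2*|ε|) ≤ δ := by
        have := neg_abs_le δ
        linarith
      rw [hδ] at this
      linarith
    have h6 : (6:ℝ) ≤ |δ| * ((t:ℝ)*s2 + b) := by
      rw [habsD]
      have : (6:ℝ) ≤ |((2*t^2 - b^2 : ℤ) : ℝ)| := by
        rw [← Int.cast_abs]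
        exact_mod_cast hD
      linarith
    -- bound |δ|*(t s2 + b) ≤ 2|ε| * (2 t s2 + 1)
    have hts : (0:ℝ) ≤ (t:ℝ)*s2 := by
      have ht0 : (0:ℝ) ≤ (t:ℝ) := by exact_mod_cast (by omega : (0:ℤ) ≤ t)
      exact mul_nonneg ht0 (le_of_lt s2_pos)
    have hchain : |δ| * ((t:ℝ)*s2 + b) ≤ 2*|ε| * (2*(t:ℝ)*s2 + 1) := by
      have h1 : (t:ℝ)*s2 + b ≤ 2*(t:ℝ)*s2 + 1 := by linarith
      have h2 : (0:ℝ) ≤ 2*|ε| := by positivity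
      calc |δ| * ((t:ℝ)*s2 + b) ≤ 2*|ε| * ((t:ℝ)*s2 + b) := by
            apply mul_le_mul_of_nonneg_right habs_le (le_of_lt hsum_pos)
        _ ≤ 2*|ε| * (2*(t:ℝ)*s2 + 1) := by
            apply mul_le_mul_of_nonneg_left h1 h2
    -- now numeric bound
    have htR : (t:ℝ) ≤ 2 * (pp (m+1) : ℝ) - 1 := by exact_mod_cast htT
    have hppid := two_pp_s2 (m+1)
    have habs1 : (1-s2)^(m+1) ≤ ll^(m+1) := by
      have := abs_one_sub_s2_pow (m+1); have := le_abs_self ((1-s2)^(m+1)); linarith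
    have habs2 : -(ll^(m+1)) ≤ (1-s2)^(m+1) := by
      have := abs_one_sub_s2_pow (m+1); have := neg_abs_le ((1-s2)^(m+1)); linarith
    have hkey : 2*(t:ℝ)*s2 + 1 ≤ 2*(1+s2)^(m+1) + 2*ll^(m+1) := by
      have : 2*(t:ℝ)*s2 ≤ 2*(2*(pp (m+1):ℝ) - 1)*s2 := by
        nlinarith [s2_pos, htR]
      nlinarith [s2_gt, hppid]
    have hprod : ll^(m+2) * (1+s2)^(m+1) = ll := by
      have h1 : ll^(m+1) * (1+s2)^(m+1) = 1 := by
        rw [← mul_pow, ll_mul_one_add, one_pow]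
      have : ll^(m+2) = ll * ll^(m+1) := by ring
      rw [this, mul_assoc, h1, mul_one]
    have hsmall : ll^(2*m+3) ≤ ll^3 := ll_pow_le (by omega)
    have hfin : 2*|ε| * (2*(t:ℝ)*s2 + 1) < 6 := by
      have h2e : 2*|ε| ≤ 2*ll^(m+2) := by linarith
      have hpos1 : (0:ℝ) < 2*(t:ℝ)*s2 + 1 := by nlinarith
      have step : 2*|ε| * (2*(t:ℝ)*s2 + 1) ≤ 2*ll^(m+2) * (2*(1+s2)^(m+1) + 2*ll^(m+1)) := by
        have := ll_pow_pos (m+2)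
        have hA : 2*|ε| * (2*(t:ℝ)*s2 + 1) ≤ 2*ll^(m+2) * (2*(t:ℝ)*s2 + 1) := by
          apply mul_le_mul_of_nonneg_right h2e (le_of_lt hpos1)
        have hB : 2*ll^(m+2) * (2*(t:ℝ)*s2 + 1) ≤ 2*ll^(m+2) * (2*(1+s2)^(m+1) + 2*ll^(m+1)) := by
          apply mul_le_mul_of_nonneg_left hkey (by positivity)
        linarith
      have e1 : ll^(m+2) * ll^(m+1) = ll^(2*m+3) := by
        rw [← pow_add]; congr 1; omega
      have hexp : 2*ll^(m+2) * (2*(1+s2)^(m+1) + 2*ll^(m+1))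
          = 4*(ll^(m+2) * (1+s2)^(m+1)) + 4*(ll^(m+2) * ll^(m+1)) := by ring
      rw [hprod, e1] at hexp
      have h3 : ll^(2*m+3) ≤ ll := by
        have := ll_pow_le (show 1 ≤ 2*m+3 by omega)
        simpa using this
      have hllv : ll < 3/4 := by unfold ll; nlinarith [s2_lt]
      linarith
    linarith

lemma qq_lower' (m : ℕ) : 2 * pp (m+2) + 1 ≤ qq (m+3) := qq_lower (m+1)

lemma cross2 (m : ℕ) (hm : 2 ≤ m) (t b : ℤ) (ht : Odd t) (ht1 : 1 ≤ t) (hb : 2 ≤ b) (hbe : Even b)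
    (htT : t ≤ 2 * (pp (m+2) : ℤ) - 1) (ε : ℝ) (hε : ε = (-1)^m * (s2 * (s2-1)^(m+2))) :
    ((t:ℝ) * s2 - b) * (((t:ℝ) * s2 - b) + 2*ε) > 0 := by
  set δ : ℝ := (t:ℝ) * s2 - b with hδ
  have habsε : |ε| = s2 * ll^(m+2) := by
    rw [hε, abs_mul, abs_pow, abs_neg, abs_one, one_pow, one_mul, abs_mul,
      abs_of_pos s2_pos, abs_pow]
    congr 2
    unfold ll
    rw [abs_of_pos]
    nlinarith [s2_gt]
  have hsum_pos : (0:ℝ) < (t:ℝ) * s2 + b := by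
    have h1 : (1:ℝ) ≤ (t:ℝ) := by exact_mod_cast ht1
    have h2 : (2:ℝ) ≤ (b:ℝ) := by exact_mod_cast hb
    nlinarith [s2_pos]
  have hDid : δ * ((t:ℝ)*s2 + b) = ((2*t^2 - b^2 : ℤ) : ℝ) := by
    push_cast
    nlinarith [s2_sq]
  have hmod := Dmod t b ht hbe
  have hDcases : 2*t^2 - b^2 = 2 ∨ 2*t^2 - b^2 = -2 ∨ 6 ≤ |2*t^2 - b^2| := by
    rcases abs_cases (2*t^2-b^2) with ⟨h1,h2⟩|⟨h1,h2⟩ <;> omega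
  have habsD : |δ| * ((t:ℝ)*s2 + b) = |((2*t^2 - b^2 : ℤ) : ℝ)| := by
    rw [← hDid, abs_mul, abs_of_pos hsum_pos]
  have hPell : ∀ hD : (2*t^2 - b^2 = 2 ∨ 2*t^2 - b^2 = -2), δ*(δ+2*ε) > 0 := by
    intro hD
    obtain ⟨k, hk1, hk2⟩ := pell_case t b ht1 hb hD
    have hkle : k ≤ m + 2 := by
      by_contra hk
      have : qq (m+3) ≤ qq k := qq_mono_le (by omega)
      have := qq_lower' m
      omega
    have hδval : δ = s2 * (1 - s2)^k := by
      rw [hδ, hk1, hk2, ← pell_real_sub]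
      push_cast
      nlinarith [s2_sq]
    rcases Nat.lt_or_ge k (m+2) with hk'|hk'
    · -- k ≤ m+1 : magnitude wins
      apply prod_pos_of_abs
      have habs : |δ| = s2 * ll^k := by
        rw [hδval, abs_mul, abs_of_pos s2_pos, abs_one_sub_s2_pow]
      rw [habs, habsε]
      have h1 : ll^(m+1) ≤ ll^k := ll_pow_le (by omega)
      have h2 : ll^(m+2) = ll * ll^(m+1) := by ring
      have hx := ll_pow_pos (m+1)
      have hA : 2*ll < 1 := by unfold ll; nlinarith [s2_lt]
      have hB : 2*(s2*ll^(m+2)) < s2 * ll^(m+1) := by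
        rw [h2]
        nlinarith [mul_pos (mul_pos s2_pos hx) (show (0:ℝ) < 1 - 2*ll by linarith)]
      have hC : s2*ll^(m+1) ≤ s2*ll^k := by nlinarith [s2_pos]
      linarith
    · -- k = m+2 : δ = ε
      have hk'' : k = m + 2 := by omega
      have hδε : δ = ε := by
        rw [hδval, hε, hk'', one_sub_s2, neg_pow, pow_succ, pow_succ]
        ring
      have hε0 : ε ≠ 0 := by
        intro h
        rw [h, abs_zero] at habsε
        nlinarith [s2_pos, ll_pow_pos (m+2)]
      rw [hδε]
      have he : ε*(ε+2*ε) = 3*ε^2 := by ring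
      have h2 : 0 < ε^2 := lt_of_le_of_ne (sq_nonneg ε) (Ne.symm (pow_ne_zero 2 hε0))
      rw [he]
      linarith
  rcases hDcases with hD|hD|hD
  · exact hPell (Or.inl hD)
  · exact hPell (Or.inr hD)
  · -- big D case
    apply prod_pos_of_abs
    by_contra hle
    push_neg at hle
    have hll2 : ll^2 = 3 - 2*s2 := by unfold ll; linear_combination s2_sq
    have hεb : 2*|ε| ≤ 2*(s2*ll^2) := by
      have h1 : ll^(m+2) ≤ ll^2 := ll_pow_le (by omega)
      rw [habsε]
      nlinarith [s2_pos]
    have h2e1 : 2*|ε| < 1 := by nlinarith [s2_gt, s2_lt, hll2]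
    have habs_le : |δ| ≤ 2*|ε| := hle
    have hbb : (b:ℝ) ≤ (t:ℝ)*s2 + 1 := by
      have : -(2*|ε|) ≤ δ := by
        have := neg_abs_le δ
        linarith
      rw [hδ] at this
      linarith
    have h6 : (6:ℝ) ≤ |δ| * ((t:ℝ)*s2 + b) := by
      rw [habsD]
      have : (6:ℝ) ≤ |((2*t^2 - b^2 : ℤ) : ℝ)| := by
        rw [← Int.cast_abs]
        exact_mod_cast hD
      linarith
    have hts : (0:ℝ) ≤ (t:ℝ)*s2 := by
      have ht0 : (0:ℝ) ≤ (t:ℝ) := by exact_mod_cast (by omega : (0:ℤ) ≤ t)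
      exact mul_nonneg ht0 (le_of_lt s2_pos)
    have hchain : |δ| * ((t:ℝ)*s2 + b) ≤ 2*|ε| * (2*(t:ℝ)*s2 + 1) := by
      have h1 : (t:ℝ)*s2 + b ≤ 2*(t:ℝ)*s2 + 1 := by linarith
      have h2 : (0:ℝ) ≤ 2*|ε| := by positivity
      calc |δ| * ((t:ℝ)*s2 + b) ≤ 2*|ε| * ((t:ℝ)*s2 + b) := by
            apply mul_le_mul_of_nonneg_right habs_le (le_of_lt hsum_pos)
        _ ≤ 2*|ε| * (2*(t:ℝ)*s2 + 1) := by
            apply mul_le_mul_of_nonneg_left h1 h2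
    have htR : (t:ℝ) ≤ 2 * (pp (m+2) : ℝ) - 1 := by exact_mod_cast htT
    have hppid := two_pp_s2 (m+2)
    have habs2 : -(ll^(m+2)) ≤ (1-s2)^(m+2) := by
      have := abs_one_sub_s2_pow (m+2); have := neg_abs_le ((1-s2)^(m+2)); linarith
    have hkey : 2*(t:ℝ)*s2 + 1 ≤ 2*(1+s2)^(m+2) + 2*ll^(m+2) := by
      have : 2*(t:ℝ)*s2 ≤ 2*(2*(pp (m+2):ℝ) - 1)*s2 := by
        nlinarith [s2_pos, htR]
      nlinarith [s2_gt, hppid]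
    have hprod : ll^(m+2) * (1+s2)^(m+2) = 1 := by
      rw [← mul_pow, ll_mul_one_add, one_pow]
    have hfin : 2*|ε| * (2*(t:ℝ)*s2 + 1) < 6 := by
      have h2e : 2*|ε| = 2*(s2*ll^(m+2)) := by rw [habsε]
      have hpos1 : (0:ℝ) < 2*(t:ℝ)*s2 + 1 := by nlinarith
      have step : 2*|ε| * (2*(t:ℝ)*s2 + 1) ≤ 2*(s2*ll^(m+2)) * (2*(1+s2)^(m+2) + 2*ll^(m+2)) := by
        rw [h2e]
        apply mul_le_mul_of_nonneg_left hkey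
        nlinarith [s2_pos, ll_pow_pos (m+2)]
      have e1 : ll^(m+2) * ll^(m+2) = ll^(2*m+4) := by
        rw [← pow_add]; congr 1; omega
      have hexp : 2*(s2*ll^(m+2)) * (2*(1+s2)^(m+2) + 2*ll^(m+2))
          = 4*s2*(ll^(m+2) * (1+s2)^(m+2)) + 4*s2*(ll^(m+2) * ll^(m+2)) := by ring
      rw [hprod, e1] at hexp
      have h3 : ll^(2*m+4) ≤ ll^8 := ll_pow_le (by omega)
      have hll4 : ll^4 = 17 - 12*s2 := by
        have : ll^4 = (ll^2)^2 := by ring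
        rw [this, hll2]
        linear_combination 4 * s2_sq
      have hll8 : ll^8 = 577 - 408*s2 := by
        have : ll^8 = (ll^4)^2 := by ring
        rw [this, hll4]
        linear_combination 144 * s2_sq
      have hnum : 4*s2*1 + 4*s2*ll^8 < 6 := by
        rw [hll8]
        nlinarith [s2_lt, s2_gt]
      have hmono : 4*s2*ll^(2*m+4) ≤ 4*s2*ll^8 := by nlinarith [s2_pos, h3]
      rw [hexp] at step
      linarith
    linarith

lemma ll_sq_lt_cc : ll^2 < cc := by
  unfold ll cc
  nlinarith [s2_sq, s2_gt]

lemma s2_ll_sq_lt_cc : s2 * ll^2 < cc := by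
  unfold ll cc
  nlinarith [s2_sq, s2_gt, s2_lt]

lemma floor_ge_one (s : ℕ) (hs : 1 ≤ s) : 1 ≤ ⌊(s:ℝ) * s2⌋ := by
  rw [Int.le_floor]
  have h1 : (1:ℝ) ≤ (s:ℝ) := by exact_mod_cast hs
  push_cast
  nlinarith [s2_gt]

lemma sideTransfer1 (m s : ℕ) (hs : 1 ≤ s) (hsle : s ≤ pp (m+1) - 1) :
    (side (((s:ℝ) + pp (m+2)) * s2) ↔ side ((s:ℝ) * s2)) := by
  have hpp1 : 1 ≤ pp (m+1) := by have := le_pp (m+1); omega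
  have hsle' : s + 1 ≤ pp (m+1) := by omega
  set ε : ℝ := -((1 - s2)^(m+2)) with hεdef
  have hεabs : |ε| = ll^(m+2) := by rw [hεdef, abs_neg, abs_one_sub_s2_pow]
  have hexp : ((s:ℝ) + pp (m+2)) * s2 = ((s:ℝ)*s2 + ε) + ((qq (m+2) : ℤ) : ℝ) := by
    have h := pell_real_sub (m+2)
    rw [hεdef]
    push_cast
    linear_combination -h
  rw [hexp, side_add_int]
  set x := (s:ℝ)*s2 with hx
  set g : ℤ := ⌊x⌋ with hg
  have hg1 : 1 ≤ g := floor_ge_one s hs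
  have hfr : Int.fract x = x - g := (Int.self_sub_floor x).symm
  have hεle : |ε| ≤ ll^(m+2) := le_of_eq hεabs
  have htb1 : (2*(s:ℤ)+1) ≤ 2 * (pp (m+1) : ℤ) - 1 := by
    have : (s:ℤ) + 1 ≤ (pp (m+1) : ℤ) := by exact_mod_cast hsle'
    omega
  have htb2 : (2*(s:ℤ)-1) ≤ 2 * (pp (m+1) : ℤ) - 1 := by
    have : (s:ℤ) + 1 ≤ (pp (m+1) : ℤ) := by exact_mod_cast hsle'
    omega
  have hs1 : (1:ℤ) ≤ (s:ℤ) := by exact_mod_cast hs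
  apply stab
  · rw [hεabs]
    exact lt_of_le_of_lt (ll_pow_le (by omega : 2 ≤ m+2)) ll_sq_lt_cc
  · have hcross := cross1 m (2*(s:ℤ)+1) (2*g+2) ⟨(s:ℤ), by ring⟩ (by omega) (by omega)
      ⟨g+1, by ring⟩ htb1 ε hεle
    have hid : (Int.fract x - cc) * (Int.fract x + ε - cc)
        = (((2*(s:ℤ)+1 : ℤ):ℝ) * s2 - ((2*g+2 : ℤ):ℝ))
          * ((((2*(s:ℤ)+1 : ℤ):ℝ) * s2 - ((2*g+2:ℤ):ℝ)) + 2*ε) / 4 := by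
      rw [hfr]
      unfold cc
      push_cast
      rw [hx]
      ring
    rw [hid]
    exact div_pos hcross (by norm_num)
  · have hcross := cross1 m (2*(s:ℤ)-1) (2*g) ⟨(s:ℤ)-1, by ring⟩ (by omega) (by omega)
      ⟨g, by ring⟩ htb2 ε hεle
    have hid : (Int.fract x - (1-cc)) * (Int.fract x + ε - (1-cc))
        = (((2*(s:ℤ)-1 : ℤ):ℝ) * s2 - ((2*g : ℤ):ℝ))
          * ((((2*(s:ℤ)-1 : ℤ):ℝ) * s2 - ((2*g:ℤ):ℝ)) + 2*ε) / 4 := by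
      rw [hfr]
      unfold cc
      push_cast
      rw [hx]
      ring
    rw [hid]
    exact div_pos hcross (by norm_num)

lemma sideTransfer2 (m s : ℕ) (hm : 2 ≤ m) (hs : 1 ≤ s) (hsle : s ≤ pp (m+2) - 1) :
    (side (((s:ℝ) + pp (m+2) + pp (m+1)) * s2) ↔ side ((s:ℝ) * s2)) := by
  have hpp1 : 1 ≤ pp (m+2) := by have := le_pp (m+2); omega
  have hsle' : s + 1 ≤ pp (m+2) := by omega
  set ε : ℝ := -((1 - s2)^(m+2)) - (1 - s2)^(m+1) with hεdef
  have hεval : ε = (-1)^m * (s2 * (s2-1)^(m+2)) := by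
    rw [hεdef]
    have e1 : (1-s2)^(m+1) = (-1)^(m+1) * (s2-1)^(m+1) := by rw [one_sub_s2, neg_pow]
    have e2 : (1-s2)^(m+2) = (-1)^(m+2) * (s2-1)^(m+2) := by rw [one_sub_s2, neg_pow]
    have e3 : (s2-1)^(m+2) = (s2-1)^(m+1) * (s2-1) := pow_succ _ _
    have e4 : (-1:ℝ)^(m+2) = (-1)^m := by rw [pow_succ, pow_succ]; ring
    have e5 : (-1:ℝ)^(m+1) = -((-1:ℝ)^m) := by rw [pow_succ]; ring
    rw [e1, e2, e4, e5, e3]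
    linear_combination (-((-1:ℝ)^m * (s2-1)^(m+1))) * s2_sq
  have hεabs : |ε| = s2 * ll^(m+2) := by
    rw [hεval, abs_mul, abs_pow, abs_neg, abs_one, one_pow, one_mul, abs_mul,
      abs_of_pos s2_pos, abs_pow]
    congr 2
    unfold ll
    rw [abs_of_pos]
    nlinarith [s2_gt]
  have hexp : ((s:ℝ) + pp (m+2) + pp (m+1)) * s2
      = ((s:ℝ)*s2 + ε) + ((qq (m+2) + qq (m+1) : ℤ) : ℝ) := by
    have h1 := pell_real_sub (m+2)
    have h2 := pell_real_sub (m+1)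
    rw [hεdef]
    push_cast
    linear_combination -h1-h2
  rw [hexp, side_add_int]
  set x := (s:ℝ)*s2 with hx
  set g : ℤ := ⌊x⌋ with hg
  have hg1 : 1 ≤ g := floor_ge_one s hs
  have hfr : Int.fract x = x - g := (Int.self_sub_floor x).symm
  have htb1 : (2*(s:ℤ)+1) ≤ 2 * (pp (m+2) : ℤ) - 1 := by
    have : (s:ℤ) + 1 ≤ (pp (m+2) : ℤ) := by exact_mod_cast hsle'
    omega
  have htb2 : (2*(s:ℤ)-1) ≤ 2 * (pp (m+2) : ℤ) - 1 := by
    have : (s:ℤ) + 1 ≤ (pp (m+2) : ℤ) := by exact_mod_cast hsle'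
    omega
  have hs1 : (1:ℤ) ≤ (s:ℤ) := by exact_mod_cast hs
  apply stab
  · rw [hεabs]
    have h1 : ll^(m+2) ≤ ll^2 := ll_pow_le (by omega)
    have := s2_ll_sq_lt_cc
    nlinarith [s2_pos]
  · have hcross := cross2 m hm (2*(s:ℤ)+1) (2*g+2) ⟨(s:ℤ), by ring⟩ (by omega) (by omega)
      ⟨g+1, by ring⟩ htb1 ε hεval
    have hid : (Int.fract x - cc) * (Int.fract x + ε - cc)
        = (((2*(s:ℤ)+1 : ℤ):ℝ) * s2 - ((2*g+2 : ℤ):ℝ))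
          * ((((2*(s:ℤ)+1 : ℤ):ℝ) * s2 - ((2*g+2:ℤ):ℝ)) + 2*ε) / 4 := by
      rw [hfr]
      unfold cc
      push_cast
      rw [hx]
      ring
    rw [hid]
    exact div_pos hcross (by norm_num)
  · have hcross := cross2 m hm (2*(s:ℤ)-1) (2*g) ⟨(s:ℤ)-1, by ring⟩ (by omega) (by omega)
      ⟨g, by ring⟩ htb2 ε hεval
    have hid : (Int.fract x - (1-cc)) * (Int.fract x + ε - (1-cc))
        = (((2*(s:ℤ)-1 : ℤ):ℝ) * s2 - ((2*g : ℤ):ℝ))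
          * ((((2*(s:ℤ)-1 : ℤ):ℝ) * s2 - ((2*g:ℤ):ℝ)) + 2*ε) / 4 := by
      rw [hfr]
      unfold cc
      push_cast
      rw [hx]
      ring
    rw [hid]
    exact div_pos hcross (by norm_num)

lemma near_int_side (y : ℝ) (z : ℤ) (h1 : |y - (z:ℝ)| < cc) (h2 : y ≠ (z:ℝ)) : side y := by
  have hc0 := cc_pos
  have hch := cc_lt_half
  have hab := abs_lt.mp h1
  rcases lt_or_gt_of_ne h2 with h|h
  · right
    have hfr : Int.fract y = y - z + 1 := by
      rw [show y = (y - (z:ℝ) + 1) + ((z - 1 : ℤ):ℝ) by push_cast; ring, Int.fract_add_intCast,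
        Int.fract_eq_self.mpr ⟨by linarith [hab.1], by linarith⟩]
      push_cast
      ring
    rw [hfr]
    linarith [hab.1]
  · left
    have hfr : Int.fract y = y - z := by
      rw [show y = (y - (z:ℝ)) + ((z : ℤ):ℝ) by push_cast; ring, Int.fract_add_intCast,
        Int.fract_eq_self.mpr ⟨by linarith, by linarith [hab.2]⟩]
      push_cast
      ring
    rw [hfr]
    linarith [hab.2]

lemma side_pp (m : ℕ) : side ((pp (m+2) : ℝ) * s2) := by
  apply near_int_side _ ((qq (m+2) : ℤ))
  · have h := pell_real_sub (m+2)
    have : (pp (m+2):ℝ) * s2 - ((qq (m+2) : ℤ):ℝ) = -((1-s2)^(m+2)) := by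
      push_cast
      linarith
    rw [this, abs_neg, abs_one_sub_s2_pow]
    exact lt_of_le_of_lt (ll_pow_le (by omega : 2 ≤ m+2)) ll_sq_lt_cc
  · intro h
    have h' := pell_real_sub (m+2)
    have hz : (1-s2)^(m+2) = 0 := by
      push_cast at h
      linarith
    have hpos := ll_pow_pos (m+2)
    have habs := abs_one_sub_s2_pow (m+2)
    rw [hz] at habs
    simp at habs
    linarith

lemma side_ppsum (m : ℕ) : side (((pp (m+2) : ℝ) + (pp (m+1) : ℝ)) * s2) := by
  apply near_int_side _ ((qq (m+2) + qq (m+1) : ℤ))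
  · have h1 := pell_real_sub (m+2)
    have h2 := pell_real_sub (m+1)
    have he : ((pp (m+2) : ℝ) + (pp (m+1) : ℝ)) * s2 - ((qq (m+2) + qq (m+1) : ℤ):ℝ)
        = -((1-s2)^(m+2) + (1-s2)^(m+1)) := by
      push_cast
      linarith
    rw [he, abs_neg]
    have hval : (1-s2)^(m+2) + (1-s2)^(m+1) = (1-s2)^(m+1) * (2 - s2) := by
      rw [pow_succ]
      ring
    rw [hval, abs_mul, abs_one_sub_s2_pow]
    have h2s : |2 - s2| = s2 * ll := by
      rw [abs_of_pos (by nlinarith [s2_lt] : (0:ℝ) < 2 - s2)]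
      unfold ll
      linear_combination -s2_sq
    rw [h2s]
    have : ll^(m+1) * (s2 * ll) = s2 * ll^(m+2) := by ring
    rw [this]
    have h1' : ll^(m+2) ≤ ll^2 := ll_pow_le (by omega)
    have := s2_ll_sq_lt_cc
    nlinarith [s2_pos]
  · intro h
    have h1 := pell_real_sub (m+2)
    have h2 := pell_real_sub (m+1)
    have hz : (1-s2)^(m+2) + (1-s2)^(m+1) = 0 := by
      push_cast at h
      linarith
    have hval : (1-s2)^(m+2) + (1-s2)^(m+1) = (1-s2)^(m+1) * (2 - s2) := by
      rw [pow_succ]; ring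
    rw [hval] at hz
    have hA : (1-s2)^(m+1) ≠ 0 := by
      intro h0
      have := abs_one_sub_s2_pow (m+1)
      rw [h0] at this
      simp at this
      nlinarith [ll_pow_pos (m+1)]
    have hB : (2 - s2) ≠ 0 := by nlinarith [s2_lt]
    exact (mul_ne_zero hA hB) hz

lemma fract_nat (n g : ℕ) (h1 : (g:ℝ) ≤ (n:ℝ)*s2) (h2 : (n:ℝ)*s2 < (g:ℝ)+1) :
    Int.fract ((n:ℝ)*s2) = (n:ℝ)*s2 - (g:ℝ) := by
  rw [show (n:ℝ)*s2 = ((n:ℝ)*s2 - (g:ℝ)) + ((g : ℤ):ℝ) by push_cast; ring, Int.fract_add_intCast,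
    Int.fract_eq_self.mpr ⟨by linarith, by push_cast; linarith⟩]
  push_cast
  ring

lemma notside_1 : ¬ side ((1:ℝ) * s2) := by
  have hf := fract_nat 1 1 (by push_cast; nlinarith [s2_sq, s2_pos]) (by push_cast; nlinarith [s2_sq, s2_pos])
  push_cast at hf
  intro h
  rcases h with h|h <;> rw [hf] at h <;> unfold cc at h <;> nlinarith [s2_sq, s2_pos]

lemma notside_4 : ¬ side ((4:ℝ) * s2) := by
  have hf := fract_nat 4 5 (by push_cast; nlinarith [s2_sq, s2_pos]) (by push_cast; nlinarith [s2_sq, s2_pos])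
  push_cast at hf
  intro h
  rcases h with h|h <;> rw [hf] at h <;> unfold cc at h <;> nlinarith [s2_sq, s2_pos]

lemma notside_8 : ¬ side ((8:ℝ) * s2) := by
  have hf := fract_nat 8 11 (by push_cast; nlinarith [s2_sq, s2_pos]) (by push_cast; nlinarith [s2_sq, s2_pos])
  push_cast at hf
  intro h
  rcases h with h|h <;> rw [hf] at h <;> unfold cc at h <;> nlinarith [s2_sq, s2_pos]

lemma notside_11 : ¬ side ((11:ℝ) * s2) := by
  have hf := fract_nat 11 15 (by push_cast; nlinarith [s2_sq, s2_pos]) (by push_cast; nlinarith [s2_sq, s2_pos])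
  push_cast at hf
  intro h
  rcases h with h|h <;> rw [hf] at h <;> unfold cc at h <;> nlinarith [s2_sq, s2_pos]

lemma side_9 : side ((9:ℝ) * s2) := by
  have hf := fract_nat 9 12 (by push_cast; nlinarith [s2_sq, s2_pos]) (by push_cast; nlinarith [s2_sq, s2_pos])
  push_cast at hf
  right
  rw [hf]
  unfold cc
  nlinarith [s2_sq, s2_pos]

lemma side_10 : side ((10:ℝ) * s2) := by
  have hf := fract_nat 10 14 (by push_cast; nlinarith [s2_sq, s2_pos]) (by push_cast; nlinarith [s2_sq, s2_pos])
  push_cast at hf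
  left
  rw [hf]
  unfold cc
  nlinarith [s2_sq, s2_pos]

end Aux17

namespace Aux17

lemma W_length : ∀ m, (W m).length + 1 = pp (m+1) := by
  intro m
  induction m using Nat.twoStepInduction with
  | zero => rfl
  | one => rfl
  | more m ih1 ih2 =>
    show (W (m+2)).length + 1 = pp (m+3)
    have ih1' : (W m).length + 1 = pp (m+1) := ih1
    have ih2' : (W (m+1)).length + 1 = pp (m+2) := ih2
    have h1 : pp (m+3) = 2 * pp (m+2) + pp (m+1) := by
      have e1 : pp (m+3) = pp (m+2) + qq (m+2) := rfl
      have e2 : qq (m+2) = 2 * pp (m+1) + qq (m+1) := rfl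
      have e3 : pp (m+2) = pp (m+1) + qq (m+1) := rfl
      omega
    have h2 : (W (m+2)).length = (W (m+1)).length + 1 + (W m).length + 1 + (W (m+1)).length := by
      show (W (m+1) ++ [2] ++ W m ++ [2] ++ W (m+1)).length = _
      simp [List.length_append]
      try omega
    omega

lemma W_letters : ∀ m, ∀ x ∈ W m, x = 1 ∨ x = 2 := by
  intro m
  induction m using Nat.twoStepInduction with
  | zero => simp [W]
  | one => simp [W]
  | more m ih1 ih2 =>
    intro x hx
    have : W (m+2) = W (m+1) ++ [2] ++ W m ++ [2] ++ W (m+1) := rfl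
    rw [this] at hx
    simp only [List.mem_append, List.mem_singleton] at hx
    rcases hx with ((((h|h)|h)|h)|h)
    · exact ih2 x h
    · right; exact h
    · exact ih1 x h
    · right; exact h
    · exact ih2 x h

lemma mainB : ∀ m r : ℕ, 1 ≤ r → r < pp (m+1) → ((W m).getD (r-1) 0 = 2 ↔ side ((r:ℝ) * s2)) := by
  intro m
  induction m using Nat.twoStepInduction with
  | zero =>
    intro r hr1 hr2
    have : pp (0+1) = 1 := rfl
    omega
  | one =>
    intro r hr1 hr2
    have hpp : pp (1+1) = 2 := rfl
    have hr : r = 1 := by omega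
    subst hr
    have : (W 1).getD 0 0 = 1 := rfl
    rw [this]
    push_cast
    exact iff_of_false (by norm_num) notside_1
  | more m ih1 ih2 =>
    intro r hr1 hr2
    show ((W (m+2)).getD (r-1) 0 = 2 ↔ side ((r:ℝ) * s2))
    have hr2' : r < pp (m+3) := hr2
    clear hr2
    have hlenA : (W (m+1)).length + 1 = pp (m+2) := W_length (m+1)
    have hlenB : (W m).length + 1 = pp (m+1) := W_length m
    have hWdef : W (m+2) = W (m+1) ++ [2] ++ W m ++ [2] ++ W (m+1) := rfl
    have hpp3 : pp (m+3) = 2 * pp (m+2) + pp (m+1) := by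
      have e1 : pp (m+3) = pp (m+2) + qq (m+2) := rfl
      have e2 : qq (m+2) = 2 * pp (m+1) + qq (m+1) := rfl
      have e3 : pp (m+2) = pp (m+1) + qq (m+1) := rfl
      omega
    -- case split on position
    rcases Nat.lt_or_ge (r-1) (W (m+1)).length with hc1|hc1
    · -- inside first A
      have hgd : (W (m+2)).getD (r-1) 0 = (W (m+1)).getD (r-1) 0 := by
        rw [hWdef]
        rw [List.getD_append _ _ _ _ (by simp [List.length_append]; omega),
            List.getD_append _ _ _ _ (by simp [List.length_append]; omega),
            List.getD_append _ _ _ _ (by simp [List.length_append]; omega),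
            List.getD_append _ _ _ _ (by omega)]
      rw [hgd]
      exact ih2 r hr1 (by have : pp (m+1+1) = pp (m+2) := rfl; omega)
    · rcases Nat.lt_or_ge (r-1) ((W (m+1)).length+1) with hc2|hc2
      · -- r - 1 = LA : middle first 2, r = pp (m+2)
        have hreq : r = pp (m+2) := by omega
        have hgd : (W (m+2)).getD (r-1) 0 = 2 := by
          rw [hWdef]
          rw [List.getD_append _ _ _ _ (by simp [List.length_append]; omega),
              List.getD_append _ _ _ _ (by simp [List.length_append]; omega),
              List.getD_append _ _ _ _ (by simp [List.length_append]; omega),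
              List.getD_append_right _ _ _ _ (by omega)]
          have : r - 1 - (W (m+1)).length = 0 := by omega
          rw [this]
          rfl
        rw [hgd, hreq]
        exact iff_of_true rfl (side_pp m)
      · rcases Nat.lt_or_ge (r-1) ((W (m+1)).length+1+(W m).length) with hc3|hc3
        · -- inside B : s = r - (LA+1)
          set s := r - ((W (m+1)).length+1) with hs
          have hs1 : 1 ≤ s := by omega
          have hsle : s < pp (m+1) := by omega
          have hgd : (W (m+2)).getD (r-1) 0 = (W m).getD (s-1) 0 := by
            rw [hWdef]
            rw [List.getD_append _ _ _ _ (by simp [List.length_append]; omega),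
                List.getD_append _ _ _ _ (by simp [List.length_append]; omega),
                List.getD_append_right _ _ _ _ (by simp [List.length_append]; omega)]
            have : r - 1 - (W (m+1) ++ [2]).length = s - 1 := by
              simp [List.length_append]
              omega
            rw [this]
          rw [hgd]
          have htrans : side ((r:ℝ) * s2) ↔ side ((s:ℝ) * s2) := by
            have hra : (r:ℝ) = (s:ℝ) + (pp (m+2) : ℝ) := by
              have : r = s + pp (m+2) := by omega
              rw [this]
              push_cast
              ring
            rw [hra]
            exact sideTransfer1 m s hs1 (by omega)
          rw [htrans]
          exact ih1 s hs1 hsle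
        · rcases Nat.lt_or_ge (r-1) ((W (m+1)).length+1+(W m).length+1) with hc4|hc4
          · -- second 2 : r = pp (m+2) + pp (m+1)
            have hreq : r = pp (m+2) + pp (m+1) := by omega
            have hgd : (W (m+2)).getD (r-1) 0 = 2 := by
              rw [hWdef]
              rw [List.getD_append _ _ _ _ (by simp [List.length_append]; omega),
                  List.getD_append_right _ _ _ _ (by simp [List.length_append]; omega)]
              have : r - 1 - (W (m+1) ++ [2] ++ W m).length = 0 := by
                simp [List.length_append]
                omega
              rw [this]
              rfl
            rw [hgd, hreq]
            refine iff_of_true rfl ?_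
            have : ((pp (m+2) + pp (m+1) : ℕ) : ℝ) = (pp (m+2) : ℝ) + (pp (m+1) : ℝ) := by
              push_cast; ring
            rw [this]
            exact side_ppsum m
          · -- inside last A
            obtain ⟨s, hs1, hrs⟩ : ∃ s, 1 ≤ s ∧ r = s + pp (m+2) + pp (m+1) :=
              ⟨r - (pp (m+2) + pp (m+1)), by omega, by omega⟩
            have hsle : s < pp (m+2) := by omega
            have hgd : (W (m+2)).getD (r-1) 0 = (W (m+1)).getD (s-1) 0 := by
              rw [hWdef]
              rw [List.getD_append_right _ _ _ _ (by simp [List.length_append]; omega)]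
              congr 1
              simp [List.length_append]
              omega
            rw [hgd]
            rcases Nat.lt_or_ge m 2 with hm|hm
            · interval_cases m
              · have h2' : pp (0+2) = 2 := rfl
                have h1' : pp (0+1) = 1 := rfl
                have hs' : s = 1 := by omega
                have hr4 : r = 4 := by omega
                rw [hs', hr4]
                have hcast : ((4:ℕ):ℝ) = (4:ℝ) := by norm_num
                rw [hcast]
                exact iff_of_false (by decide) notside_4
              · have h3' : pp (1+2) = 5 := rfl
                have h2' : pp (1+1) = 2 := rfl
                have hrs' : r = s + 7 := by omega
                have hsb : s ≤ 4 := by omega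
                rw [hrs']
                interval_cases s
                · have hcast : ((1+7:ℕ):ℝ) = (8:ℝ) := by norm_num
                  rw [hcast]
                  exact iff_of_false (by decide) notside_8
                · have hcast : ((2+7:ℕ):ℝ) = (9:ℝ) := by norm_num
                  rw [hcast]
                  exact iff_of_true (by decide) side_9
                · have hcast : ((3+7:ℕ):ℝ) = (10:ℝ) := by norm_num
                  rw [hcast]
                  exact iff_of_true (by decide) side_10
                · have hcast : ((4+7:ℕ):ℝ) = (11:ℝ) := by norm_num
                  rw [hcast]
                  exact iff_of_false (by decide) notside_11
            · have htrans : side ((r:ℝ) * s2) ↔ side ((s:ℝ) * s2) := by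
                have hra : (r:ℝ) = (s:ℝ) + (pp (m+2) : ℝ) + (pp (m+1) : ℝ) := by
                  rw [hrs]; push_cast; ring
                rw [hra]
                exact sideTransfer2 m s hm hs1 (by omega)
              rw [htrans]
              exact ih2 s hs1 (by have : pp (m+1+1) = pp (m+2) := rfl; omega)

end Aux17

namespace Aux17

lemma fLetter (f : ℕ → ℕ) (hf : ∀ n k : ℕ, k < (W n).length → f (k + 1) = (W n).getD k 0)
    (r : ℕ) (hr : 1 ≤ r) : (f r = 2 ↔ side ((r:ℝ) * s2)) ∧ (f r = 1 ∨ f r = 2) := by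
  have hlen : (W r).length + 1 = pp (r+1) := W_length r
  have hrlt : r < pp (r+1) := by have := le_pp (r+1); omega
  have hidx : r - 1 < (W r).length := by omega
  have hfr : f r = (W r).getD (r-1) 0 := by
    have h0 := hf r (r-1) hidx
    have h1 : r - 1 + 1 = r := by omega
    rw [h1] at h0
    exact h0
  constructor
  · rw [hfr]; exact mainB r r hr hrlt
  · rw [hfr]
    have hmem : (W r).getD (r-1) 0 ∈ W r := by
      rw [List.getD_eq_getElem _ _ hidx]
      exact List.getElem_mem _
    exact W_letters r _ hmem

lemma dense_step (θ : ℝ) (hθ : Irrational θ) (E : ℝ) (hE : 0 < E) :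
    ∃ m : ℕ, 1 ≤ m ∧ ∃ Z : ℤ, ∃ d : ℝ, (m:ℝ)*θ = Z + d ∧ d ≠ 0 ∧ |d| < E := by
  obtain ⟨N, hN⟩ := exists_nat_one_div_lt hE
  set N' := N + 1 with hN'
  have hN'pos : 0 < N' := by omega
  have hN'R : (0:ℝ) < N' := by positivity
  set G : ℕ → ℕ := fun i => (⌊(N':ℝ) * Int.fract ((i:ℝ)*θ)⌋).toNat with hG
  have hmaps : ∀ i ∈ Finset.range (N'+1), G i ∈ Finset.range N' := by
    intro i _
    rw [Finset.mem_range]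
    show (⌊(N':ℝ) * Int.fract ((i:ℝ)*θ)⌋).toNat < N'
    have h0 : (0:ℝ) ≤ (N':ℝ) * Int.fract ((i:ℝ)*θ) :=
      mul_nonneg (le_of_lt hN'R) (Int.fract_nonneg _)
    have h1 : (N':ℝ) * Int.fract ((i:ℝ)*θ) < N' := by
      nlinarith [Int.fract_lt_one ((i:ℝ)*θ)]
    have h2 : ⌊(N':ℝ) * Int.fract ((i:ℝ)*θ)⌋ < (N' : ℤ) := by
      rw [Int.floor_lt]
      exact_mod_cast h1
    omega
  obtain ⟨i, hi, j, hj, hij, hGij⟩ :=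
    Finset.exists_ne_map_eq_of_card_lt_of_maps_to (by simp) hmaps
  -- wlog i < j by symmetry of the construction, handle both
  have key : ∀ a b : ℕ, a < b → b ≤ N' → G a = G b →
      ∃ m : ℕ, 1 ≤ m ∧ ∃ Z : ℤ, ∃ d : ℝ, (m:ℝ)*θ = Z + d ∧ d ≠ 0 ∧ |d| < E := by
    intro a b hab hbN hGab
    have hflnn : ∀ c : ℕ, (0:ℤ) ≤ ⌊(N':ℝ) * Int.fract ((c:ℝ)*θ)⌋ := by
      intro c
      apply Int.floor_nonneg.mpr
      exact mul_nonneg (le_of_lt hN'R) (Int.fract_nonneg _)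
    have hfl : ⌊(N':ℝ) * Int.fract ((a:ℝ)*θ)⌋ = ⌊(N':ℝ) * Int.fract ((b:ℝ)*θ)⌋ := by
      have h1 := hflnn a
      have h2 := hflnn b
      rw [hG] at hGab
      simp only at hGab
      omega
    set x := Int.fract ((a:ℝ)*θ) with hx
    set y := Int.fract ((b:ℝ)*θ) with hy
    have hd : |y - x| < 1/N' := by
      have h1 := Int.floor_le ((N':ℝ) * x)
      have h2 := Int.lt_floor_add_one ((N':ℝ) * x)
      have h3 := Int.floor_le ((N':ℝ) * y)
      have h4 := Int.lt_floor_add_one ((N':ℝ) * y)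
      rw [hfl] at h1 h2
      rw [abs_lt]
      constructor
      · have h7 : x - y < 1/N' := by
          rw [lt_div_iff₀ hN'R]
          nlinarith
        linarith
      · rw [lt_div_iff₀ hN'R]
        nlinarith
    set m := b - a with hm
    have hm1 : 1 ≤ m := by omega
    have hmθ : (m:ℝ)*θ = ((⌊(b:ℝ)*θ⌋ - ⌊(a:ℝ)*θ⌋ : ℤ) : ℝ) + (y - x) := by
      have hbcast : (m:ℝ) = (b:ℝ) - (a:ℝ) := by
        rw [hm]
        push_cast [Nat.cast_sub (le_of_lt hab)]
        ring
      rw [hbcast]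
      have e1 : (b:ℝ)*θ = ⌊(b:ℝ)*θ⌋ + y := by rw [hy]; exact (Int.floor_add_fract _).symm
      have e2 : (a:ℝ)*θ = ⌊(a:ℝ)*θ⌋ + x := by rw [hx]; exact (Int.floor_add_fract _).symm
      push_cast
      nlinarith [e1, e2]
    have hdne : y - x ≠ 0 := by
      intro h0
      have : (m:ℝ)*θ = ((⌊(b:ℝ)*θ⌋ - ⌊(a:ℝ)*θ⌋ : ℤ) : ℝ) := by
        rw [hmθ, h0]
        ring
      have hirr : Irrational ((m:ℝ)*θ) := by
        rw [show (m:ℝ) = ((m:ℕ):ℝ) by norm_num]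
        exact (irrational_natCast_mul_iff.mpr ⟨by omega, hθ⟩)
      exact hirr.ne_int _ this
    refine ⟨m, hm1, _, y - x, hmθ, hdne, ?_⟩
    calc |y - x| < 1/N' := hd
      _ < E := by
        rw [hN']
        push_cast
        push_cast at hN
        linarith
  rw [Finset.mem_range] at hi hj
  rcases lt_or_gt_of_ne hij with h|h
  · exact key i j h (by omega) hGij
  · exact key j i h (by omega) hGij.symm

lemma dense_orbit (θ : ℝ) (hθ : Irrational θ) (u v : ℝ) (h0 : 0 ≤ u) (h1 : v ≤ 1) (huv : u < v) :
    ∃ n : ℕ, 1 ≤ n ∧ u < Int.fract ((n:ℝ) * θ) ∧ Int.fract ((n:ℝ) * θ) < v := by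
  obtain ⟨m, hm1, Z, d, hmθ, hdne, hdE⟩ := dense_step θ hθ (v - u) (by linarith)
  rcases lt_or_gt_of_ne hdne with hneg|hpos
  · -- d < 0 : use δ = -d, fract((km)θ) = 1 - kδ
    set δ := -d with hδ
    have hδpos : 0 < δ := by simp [hδ]; linarith
    have hδE : δ < v - u := by
      have := abs_lt.mp hdE
      simp [hδ]
      linarith [this.1]
    have hfl0 : (0:ℤ) ≤ ⌊(1-v)/δ⌋ := Int.floor_nonneg.mpr (div_nonneg (by linarith) (le_of_lt hδpos))
    obtain ⟨k, hk1, hkR⟩ : ∃ k : ℕ, 1 ≤ k ∧ (k:ℝ) = ((⌊(1-v)/δ⌋ : ℤ):ℝ) + 1 := by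
      refine ⟨(⌊(1-v)/δ⌋).toNat + 1, by omega, ?_⟩
      have : (((⌊(1-v)/δ⌋).toNat + 1 : ℕ) : ℤ) = ⌊(1-v)/δ⌋ + 1 := by omega
      exact_mod_cast this
    have hkub : (k:ℝ) * δ ≤ (1-v) + δ := by
      have := Int.floor_le ((1-v)/δ)
      rw [hkR]
      have h2 : ((⌊(1-v)/δ⌋ : ℤ):ℝ) * δ ≤ (1-v) := by
        rw [← le_div_iff₀ hδpos] at *
        linarith
      nlinarith
    have hklb : (1-v) < (k:ℝ) * δ := by
      have := Int.lt_floor_add_one ((1-v)/δ)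
      rw [hkR]
      rw [div_lt_iff₀ hδpos] at this
      nlinarith
    have hkδ1 : (k:ℝ) * δ < 1 - u := by linarith
    have hfr : Int.fract (((k*m : ℕ):ℝ) * θ) = 1 - (k:ℝ)*δ := by
      have e1 : ((k*m : ℕ):ℝ) * θ = (1 - (k:ℝ)*δ) + (((k:ℤ) * Z - 1 : ℤ):ℝ) := by
        push_cast
        rw [hδ]
        linear_combination (k:ℝ) * hmθ
      rw [e1, Int.fract_add_intCast, Int.fract_eq_self.mpr ⟨by linarith, by linarith⟩]
    exact ⟨k * m, Nat.mul_pos hk1 hm1, by rw [hfr]; linarith, by rw [hfr]; linarith⟩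
  · -- d > 0 : fract((km)θ) = kd
    have hdE' : d < v - u := by
      have := abs_lt.mp hdE
      linarith [this.2]
    have hfl0 : (0:ℤ) ≤ ⌊u/d⌋ := Int.floor_nonneg.mpr (div_nonneg h0 (le_of_lt hpos))
    obtain ⟨k, hk1, hkR⟩ : ∃ k : ℕ, 1 ≤ k ∧ (k:ℝ) = ((⌊u/d⌋ : ℤ):ℝ) + 1 := by
      refine ⟨(⌊u/d⌋).toNat + 1, by omega, ?_⟩
      have : (((⌊u/d⌋).toNat + 1 : ℕ) : ℤ) = ⌊u/d⌋ + 1 := by omega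
      exact_mod_cast this
    have hkub : (k:ℝ) * d ≤ u + d := by
      have := Int.floor_le (u/d)
      rw [hkR]
      have h2 : ((⌊u/d⌋ : ℤ):ℝ) * d ≤ u := by
        rw [← le_div_iff₀ hpos] at *
        linarith
      nlinarith
    have hklb : u < (k:ℝ) * d := by
      have := Int.lt_floor_add_one (u/d)
      rw [hkR]
      rw [div_lt_iff₀ hpos] at this
      nlinarith
    have hkd1 : (k:ℝ) * d < v := by linarith
    have hfr : Int.fract (((k*m : ℕ):ℝ) * θ) = (k:ℝ)*d := by
      have e1 : ((k*m : ℕ):ℝ) * θ = ((k:ℝ)*d) + (((k:ℤ) * Z : ℤ):ℝ) := by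
        push_cast
        linear_combination (k:ℝ) * hmθ
      have hkd0 : (0:ℝ) ≤ (k:ℝ)*d := by
        have : (0:ℝ) ≤ (k:ℝ) := by positivity
        nlinarith
      rw [e1, Int.fract_add_intCast, Int.fract_eq_self.mpr ⟨hkd0, by linarith⟩]
    exact ⟨k * m, Nat.mul_pos hk1 hm1, by rw [hfr]; linarith, by rw [hfr]; linarith⟩
end Aux17

open Aux17

/-- If `f = (f(n))_{n ≥ 1}` is the infinite word beginning with `Wₙ` for every `n`, then for
every `k ≥ 2` the `k`-kernel of `f` is infinite, i.e. `f` is not `k`-automatic. -/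
theorem stmt17 (f : ℕ → ℕ)
    (hf : ∀ n k : ℕ, k < (W n).length → f (k + 1) = (W n).getD k 0) :
    ∀ k : ℕ, 2 ≤ k → (kernelK k f).Infinite := by
  intro k hk
  by_contra hfin
  rw [Set.not_infinite] at hfin
  set g : ℕ → (ℕ → ℕ) := fun i => fun n => f (k ^ i * n + 0) with hgdef
  have hgmem : ∀ i, g i ∈ kernelK k f := fun i => ⟨i, 0, pow_pos (by omega) i, rfl⟩
  have hginj : ¬ Function.Injective g := by
    intro hinj
    exact Set.infinite_of_injective_forall_mem hinj hgmem hfin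
  rw [Function.not_injective_iff] at hginj
  obtain ⟨A, B, hAB, hne⟩ := hginj
  -- wlog A < B
  obtain ⟨M, M', hlt, hMM'⟩ : ∃ M M' : ℕ, M < M' ∧ g M = g M' := by
    rcases lt_or_gt_of_ne hne with h|h
    · exact ⟨A, B, h, hAB⟩
    · exact ⟨B, A, h, hAB.symm⟩
  set a := k ^ M with ha
  set q := k ^ (M' - M) with hqd
  have ha1 : 1 ≤ a := Nat.one_le_pow _ _ (by omega)
  have hq2 : 2 ≤ q := by
    calc 2 ≤ k := hk
      _ = k ^ 1 := (pow_one k).symm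
      _ ≤ k ^ (M' - M) := Nat.pow_le_pow_right (by omega) (by omega)
  have hgeq : ∀ n, f (a * n) = f (a * (q * n)) := by
    intro n
    have h1 : g M n = g M' n := by rw [hMM']
    simp only [hgdef] at h1
    have h2 : k ^ M' = a * q := by
      rw [ha, hqd, ← pow_add]
      congr 1
      omega
    rw [Nat.add_zero, Nat.add_zero, h2] at h1
    rw [h1]
    congr 1
    ring
  -- choose j with cc < j/q < 1 - cc
  have hqR : (0:ℝ) < (q:ℝ) := by positivity
  have hcc0 := cc_pos
  have hcc2 := cc_lt_half
  have hll : 1 - 2*cc = ll := by unfold cc ll; ring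
  obtain ⟨j, hj1, hj2⟩ : ∃ j : ℕ, cc < (j:ℝ)/(q:ℝ) ∧ (j:ℝ)/(q:ℝ) < 1 - cc := by
    rcases Nat.lt_or_ge q 3 with hq3|hq3
    · have hq2' : q = 2 := by omega
      refine ⟨1, ?_, ?_⟩ <;> rw [hq2']
      · rw [lt_div_iff₀ (by norm_num)]
        push_cast
        linarith
      · rw [div_lt_iff₀ (by norm_num)]
        push_cast
        linarith
    · have hfl0 : (0:ℤ) ≤ ⌊(q:ℝ)*cc⌋ := Int.floor_nonneg.mpr (by positivity)
      obtain ⟨j, hjR⟩ : ∃ j : ℕ, (j:ℝ) = ((⌊(q:ℝ)*cc⌋ : ℤ):ℝ) + 1 := by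
        refine ⟨(⌊(q:ℝ)*cc⌋).toNat + 1, ?_⟩
        have : (((⌊(q:ℝ)*cc⌋).toNat + 1 : ℕ) : ℤ) = ⌊(q:ℝ)*cc⌋ + 1 := by omega
        exact_mod_cast this
      refine ⟨j, ?_, ?_⟩
      · rw [lt_div_iff₀ hqR, hjR]
        have := Int.lt_floor_add_one ((q:ℝ)*cc)
        linarith
      · rw [div_lt_iff₀ hqR, hjR]
        have h1 := Int.floor_le ((q:ℝ)*cc)
        have h2 : (1:ℝ) < (q:ℝ) * ll := by
          have : (3:ℝ) ≤ (q:ℝ) := by exact_mod_cast hq3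
          have hllgt : (0.41:ℝ) < ll := by unfold ll; nlinarith [s2_gt]
          nlinarith
        have : (q:ℝ) * (1 - cc) = q - q*cc := by ring
        nlinarith [hll]
  -- target interval
  set u : ℝ := (j:ℝ)/(q:ℝ) with hu
  set v : ℝ := min (1 - cc) (((j:ℝ) + cc)/(q:ℝ)) with hv
  have huv : u < v := by
    rw [hv]
    apply lt_min hj2
    rw [hu, div_lt_div_iff₀ hqR hqR]
    nlinarith
  have hirr : Irrational ((a:ℝ) * s2) := by
    apply irrational_natCast_mul_iff.mpr
    constructor
    · omega
    · exact irrational_sqrt_two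
  obtain ⟨n, hn1, hlo, hhi⟩ := dense_orbit ((a:ℝ) * s2) hirr u v (by positivity)
    (by rw [hv]; exact min_le_left _ _ |>.trans (by linarith)) huv
  -- x = fract of (a*n) * s2
  have hxid : ((a*n : ℕ):ℝ) * s2 = (n:ℝ) * ((a:ℝ) * s2) := by push_cast; ring
  set x := Int.fract ((n:ℝ) * ((a:ℝ) * s2)) with hxdef
  have hx0 : 0 ≤ x := Int.fract_nonneg _
  have hx1 : x < 1 := Int.fract_lt_one _
  have hxv1 : x < 1 - cc := lt_of_lt_of_le hhi (by rw [hv]; exact min_le_left _ _)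
  have hxv2 : (q:ℝ) * x < (j:ℝ) + cc := by
    have h2 : x < ((j:ℝ) + cc)/(q:ℝ) := lt_of_lt_of_le hhi (by rw [hv]; exact min_le_right _ _)
    rw [lt_div_iff₀ hqR] at h2
    linarith [h2]
  have hxu : cc < x := lt_trans hj1 hlo
  -- f (a*n) = 1
  have hnot : ¬ side (((a*n : ℕ):ℝ) * s2) := by
    rw [hxid]
    intro hs
    rcases hs with h|h
    · rw [← hxdef] at h; linarith [hj1]
    · rw [← hxdef] at h; linarith
  have hfan := fLetter f hf (a*n) (Nat.mul_pos ha1 hn1)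
  have hfan1 : f (a*n) = 1 := by
    rcases hfan.2 with h|h
    · exact h
    · exact absurd (hfan.1.mp h) hnot
  -- f (a*(q*n)) = 2
  have hqj : (j:ℝ) < (q:ℝ) * x := by
    have : (j:ℝ)/(q:ℝ) < x := hlo
    rw [div_lt_iff₀ hqR] at this
    linarith
  have hside : side (((a*(q*n) : ℕ):ℝ) * s2) := by
    have hfr : Int.fract (((a*(q*n) : ℕ):ℝ) * s2) = (q:ℝ)*x - (j:ℝ) := by
      have e1 : ((a*(q*n) : ℕ):ℝ) * s2
          = ((q:ℝ)*x - (j:ℝ)) + (((q:ℕ) * ⌊(n:ℝ) * ((a:ℝ) * s2)⌋ + (j:ℕ) : ℤ):ℝ) := by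
        have hfl := Int.floor_add_fract ((n:ℝ) * ((a:ℝ) * s2))
        rw [← hxdef] at hfl
        push_cast
        nlinarith [hfl]
      rw [e1, Int.fract_add_intCast, Int.fract_eq_self.mpr ⟨by linarith, by linarith [cc_lt_half]⟩]
    left
    rw [hfr]
    linarith
  have hfaqn := fLetter f hf (a*(q*n)) (Nat.mul_pos ha1 (Nat.mul_pos (by omega) hn1))
  have hfaqn2 : f (a*(q*n)) = 2 := hfaqn.1.mpr hside
  have := hgeq n
  omega
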